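/- Let Q be a commutative R-algebra free of rank 4 with R-basis 1, q₁, q₂, q₃ such that q₁q₂ has no q₁ or q₂ component and q₁q₃ has no q₁ component. Suppose C is free of rank 2 with basis c₁, c₂ and φ: Q/R → C is the quadratic map given by φ = A·c₂ + B·c₁ where A = Σ_{i≤j} a_{ij}x_ix_j, B = Σ_{i≤j} b_{ij}x_ix_j in the dual coordinates x_i of q_i. Write q_iq_j = m⁰_{ij} + Σ_k m^k_{ij} q_k and λ^{ℓ₁ℓ₂}_{ℓ₃ℓ₄} = a_{ℓ₁ℓ₂}b_{ℓ₃ℓ₄} − b_{ℓ₁ℓ₂}a_{ℓ₃ℓ₄}. If the resolvent condition δ(1∧x∧y∧xy) = φ(x)∧φ(y) holds for all x, y ∈ Q (with δ the orientation sending 1∧q₁∧q₂∧q₃ to c₁∧c₂ appropriately), then for every permutation (i,j,k) of (1,2,3) with sign ±: m^k_{ij} = ±λ^{jj}_{ii} and m^k_{ii} = ±λ^{ij}_{ii}. -/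

import Mathlib

variable {R : Type*} [CommRing R] {Q : Type*} [CommRing Q] [Algebra R Q]

private theorem det_fin_four' {S : Type*} [CommRing S] (A : Matrix (Fin 4) (Fin 4) S) :
    A.det =
      A 0 0 * A 1 1 * A 2 2 * A 3 3 - A 0 0 * A 1 1 * A 2 3 * A 3 2 -
        A 0 0 * A 1 2 * A 2 1 * A 3 3 + A 0 0 * A 1 2 * A 2 3 * A 3 1 +
        A 0 0 * A 1 3 * A 2 1 * A 3 2 - A 0 0 * A 1 3 * A 2 2 * A 3 1 -
        A 0 1 * A 1 0 * A 2 2 * A 3 3 + A 0 1 * A 1 0 * A 2 3 * A 3 2 +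
        A 0 1 * A 1 2 * A 2 0 * A 3 3 - A 0 1 * A 1 2 * A 2 3 * A 3 0 -
        A 0 1 * A 1 3 * A 2 0 * A 3 2 + A 0 1 * A 1 3 * A 2 2 * A 3 0 +
        A 0 2 * A 1 0 * A 2 1 * A 3 3 - A 0 2 * A 1 0 * A 2 3 * A 3 1 -
        A 0 2 * A 1 1 * A 2 0 * A 3 3 + A 0 2 * A 1 1 * A 2 3 * A 3 0 +
        A 0 2 * A 1 3 * A 2 0 * A 3 1 - A 0 2 * A 1 3 * A 2 1 * A 3 0 -
        A 0 3 * A 1 0 * A 2 1 * A 3 2 + A 0 3 * A 1 0 * A 2 2 * A 3 1 +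
        A 0 3 * A 1 1 * A 2 0 * A 3 2 - A 0 3 * A 1 1 * A 2 2 * A 3 0 -
        A 0 3 * A 1 2 * A 2 0 * A 3 1 + A 0 3 * A 1 2 * A 2 1 * A 3 0 := by
  rw [Matrix.det_succ_row_zero]
  simp only [Fin.sum_univ_four, Matrix.det_fin_three, Matrix.submatrix_apply]
  norm_num [Fin.succAbove, Fin.lt_def, show (Fin.succ 2 : Fin 4) = 3 from rfl,
    show ((3 : Fin 4) : ℕ) = 3 from rfl, show (Fin.castSucc 2 : Fin 4) = 2 from rfl]
  ring

/-- The coordinates of `x` in `Q/R` with respect to the basis `q₁, q₂, q₃` (the images of the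
basis elements `e 1, e 2, e 3` of `Q`). -/
noncomputable def coordsQ (e : Module.Basis (Fin 4) R Q) (x : Q) (p : Fin 3) : R :=
  e.repr x p.succ

/-- Evaluation of the ternary quadratic form `Σ_{i≤j} a_{ij} x_i x_j` on a coordinate vector. -/
def evalTQF (a : Fin 3 → Fin 3 → R) (v : Fin 3 → R) : R :=
  ∑ p, ∑ q, if p ≤ q then a p q * v p * v q else 0

/-- The structure constant `m^k_{ij}`: the coefficient of `q_k` in `q_i q_j`. -/
noncomputable def structConst (e : Module.Basis (Fin 4) R Q) (i j k : Fin 3) : R :=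
  e.repr (e i.succ * e j.succ) k.succ

set_option maxHeartbeats 2000000 in
/-- If `Q` is a quartic algebra with basis `1, q₁, q₂, q₃` (normalized so that `q₁q₂` has no
`q₁` or `q₂` component and `q₁q₃` has no `q₁` component) and the resolvent condition
`δ(1∧x∧y∧xy) = φ(x)∧φ(y)` holds for the quadratic map `φ = A·c₂ + B·c₁`, then for every
permutation `(i,j,k)` of the indices with sign `±`, `m^k_{ij} = ±λ^{jj}_{ii}` and
`m^k_{ii} = ±λ^{ij}_{ii}`. -/
theorem resolvent_condition_determines_multiplication
    (e : Module.Basis (Fin 4) R Q) (he : e 0 = 1)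
    (a b : Fin 3 → Fin 3 → R)
    (ha : ∀ i j, a i j = a j i) (hb : ∀ i j, b i j = b j i)
    (hnorm1 : e.repr (e 1 * e 2) 1 = 0)
    (hnorm2 : e.repr (e 1 * e 2) 2 = 0)
    (hnorm3 : e.repr (e 1 * e 3) 1 = 0)
    (hres : ∀ x y : Q,
      Matrix.det (Matrix.of fun r s : Fin 4 => e.repr (![(1 : Q), x, y, x * y] r) s) =
        evalTQF b (coordsQ e x) * evalTQF a (coordsQ e y) -
          evalTQF a (coordsQ e x) * evalTQF b (coordsQ e y)) :
    ∀ σ : Equiv.Perm (Fin 3),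
      structConst e (σ 0) (σ 1) (σ 2) =
        ((Equiv.Perm.sign σ : ℤ) •
          (a (σ 1) (σ 1) * b (σ 0) (σ 0) - b (σ 1) (σ 1) * a (σ 0) (σ 0)) : R) ∧
      structConst e (σ 0) (σ 0) (σ 2) =
        ((Equiv.Perm.sign σ : ℤ) •
          (a (σ 0) (σ 1) * b (σ 0) (σ 0) - b (σ 0) (σ 1) * a (σ 0) (σ 0)) : R) := by
  suffices h : ∀ (i j k : Fin 3) (ε : ℤ),
      ((i = 0 ∧ j = 1 ∧ k = 2 ∧ ε = 1) ∨
        (i = 0 ∧ j = 2 ∧ k = 1 ∧ ε = -1) ∨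
        (i = 1 ∧ j = 0 ∧ k = 2 ∧ ε = -1) ∨
        (i = 1 ∧ j = 2 ∧ k = 0 ∧ ε = 1) ∨
        (i = 2 ∧ j = 0 ∧ k = 1 ∧ ε = 1) ∨
        (i = 2 ∧ j = 1 ∧ k = 0 ∧ ε = -1)) →
      structConst e i j k = (ε • (a j j * b i i - b j j * a i i) : R) ∧
      structConst e i i k = (ε • (a i j * b i i - b i j * a i i) : R) by
    intro σ
    have hmem := Finset.mem_univ σ
    fin_cases hmem <;> exact h _ _ _ _ (by decide)
  intro i j k ε h
  rcases h with h | h | h | h | h | h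
  · obtain ⟨rfl, rfl, rfl, rfl⟩ := h
    have H1 := hres (e (((0 : Fin 3)).succ)) (e (((1 : Fin 3)).succ))
    have H2 := hres (e (((0 : Fin 3)).succ)) (e (((0 : Fin 3)).succ) + e (((1 : Fin 3)).succ))
    rw [det_fin_four'] at H1 H2
    rw [show e ((0 : Fin 3)).succ * (e ((0 : Fin 3)).succ + e ((1 : Fin 3)).succ)
        = e ((0 : Fin 3)).succ * e ((0 : Fin 3)).succ
          + e ((0 : Fin 3)).succ * e ((1 : Fin 3)).succ by ring] at H2
    simp only [Matrix.of_apply, Matrix.cons_val', Matrix.cons_val_zero, Matrix.cons_val_one,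
      Matrix.head_cons, Matrix.cons_val_two, Matrix.tail_cons, Matrix.cons_val_three,
      Matrix.empty_val', Matrix.cons_val_fin_one, ← he, map_add, Finsupp.add_apply,
      Module.Basis.repr_self, Finsupp.single_apply, evalTQF, coordsQ, Fin.sum_univ_three,
      show ((0 : Fin 3).succ : Fin 4) = 1 from rfl, show ((1 : Fin 3).succ : Fin 4) = 2 from rfl,
      show ((2 : Fin 3).succ : Fin 4) = 3 from rfl] at H1 H2
    norm_num [Fin.ext_iff, Fin.le_def, Fin.val_succ,
      show ((0 : Fin 4) : ℕ) = 0 from rfl, show ((1 : Fin 4) : ℕ) = 1 from rfl,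
      show ((2 : Fin 4) : ℕ) = 2 from rfl, show ((3 : Fin 4) : ℕ) = 3 from rfl,
      show ((0 : Fin 3) : ℕ) = 0 from rfl, show ((1 : Fin 3) : ℕ) = 1 from rfl,
      show ((2 : Fin 3) : ℕ) = 2 from rfl] at H1 H2
    simp only [structConst, one_smul,
      show ((0 : Fin 3).succ : Fin 4) = 1 from rfl, show ((1 : Fin 3).succ : Fin 4) = 2 from rfl,
      show ((2 : Fin 3).succ : Fin 4) = 3 from rfl]
    constructor
    · linear_combination (1 : R) * H1
    · linear_combination (1 : R) * H2 - (1 : R) * H1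
  · obtain ⟨rfl, rfl, rfl, rfl⟩ := h
    have H1 := hres (e (((0 : Fin 3)).succ)) (e (((2 : Fin 3)).succ))
    have H2 := hres (e (((0 : Fin 3)).succ)) (e (((0 : Fin 3)).succ) + e (((2 : Fin 3)).succ))
    rw [det_fin_four'] at H1 H2
    rw [show e ((0 : Fin 3)).succ * (e ((0 : Fin 3)).succ + e ((2 : Fin 3)).succ)
        = e ((0 : Fin 3)).succ * e ((0 : Fin 3)).succ
          + e ((0 : Fin 3)).succ * e ((2 : Fin 3)).succ by ring] at H2
    simp only [Matrix.of_apply, Matrix.cons_val', Matrix.cons_val_zero, Matrix.cons_val_one,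
      Matrix.head_cons, Matrix.cons_val_two, Matrix.tail_cons, Matrix.cons_val_three,
      Matrix.empty_val', Matrix.cons_val_fin_one, ← he, map_add, Finsupp.add_apply,
      Module.Basis.repr_self, Finsupp.single_apply, evalTQF, coordsQ, Fin.sum_univ_three,
      show ((0 : Fin 3).succ : Fin 4) = 1 from rfl, show ((1 : Fin 3).succ : Fin 4) = 2 from rfl,
      show ((2 : Fin 3).succ : Fin 4) = 3 from rfl] at H1 H2
    norm_num [Fin.ext_iff, Fin.le_def, Fin.val_succ,
      show ((0 : Fin 4) : ℕ) = 0 from rfl, show ((1 : Fin 4) : ℕ) = 1 from rfl,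
      show ((2 : Fin 4) : ℕ) = 2 from rfl, show ((3 : Fin 4) : ℕ) = 3 from rfl,
      show ((0 : Fin 3) : ℕ) = 0 from rfl, show ((1 : Fin 3) : ℕ) = 1 from rfl,
      show ((2 : Fin 3) : ℕ) = 2 from rfl] at H1 H2
    simp only [structConst, neg_smul, one_smul,
      show ((0 : Fin 3).succ : Fin 4) = 1 from rfl, show ((1 : Fin 3).succ : Fin 4) = 2 from rfl,
      show ((2 : Fin 3).succ : Fin 4) = 3 from rfl]
    constructor
    · linear_combination (-1 : R) * H1
    · linear_combination (-1 : R) * H2 - (-1 : R) * H1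
  · obtain ⟨rfl, rfl, rfl, rfl⟩ := h
    have H1 := hres (e (((1 : Fin 3)).succ)) (e (((0 : Fin 3)).succ))
    have H2 := hres (e (((1 : Fin 3)).succ)) (e (((1 : Fin 3)).succ) + e (((0 : Fin 3)).succ))
    rw [det_fin_four'] at H1 H2
    rw [show e ((1 : Fin 3)).succ * (e ((1 : Fin 3)).succ + e ((0 : Fin 3)).succ)
        = e ((1 : Fin 3)).succ * e ((1 : Fin 3)).succ
          + e ((1 : Fin 3)).succ * e ((0 : Fin 3)).succ by ring] at H2
    simp only [Matrix.of_apply, Matrix.cons_val', Matrix.cons_val_zero, Matrix.cons_val_one,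
      Matrix.head_cons, Matrix.cons_val_two, Matrix.tail_cons, Matrix.cons_val_three,
      Matrix.empty_val', Matrix.cons_val_fin_one, ← he, map_add, Finsupp.add_apply,
      Module.Basis.repr_self, Finsupp.single_apply, evalTQF, coordsQ, Fin.sum_univ_three,
      show ((0 : Fin 3).succ : Fin 4) = 1 from rfl, show ((1 : Fin 3).succ : Fin 4) = 2 from rfl,
      show ((2 : Fin 3).succ : Fin 4) = 3 from rfl] at H1 H2
    norm_num [Fin.ext_iff, Fin.le_def, Fin.val_succ,
      show ((0 : Fin 4) : ℕ) = 0 from rfl, show ((1 : Fin 4) : ℕ) = 1 from rfl,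
      show ((2 : Fin 4) : ℕ) = 2 from rfl, show ((3 : Fin 4) : ℕ) = 3 from rfl,
      show ((0 : Fin 3) : ℕ) = 0 from rfl, show ((1 : Fin 3) : ℕ) = 1 from rfl,
      show ((2 : Fin 3) : ℕ) = 2 from rfl] at H1 H2
    rw [ha 0 1, hb 0 1] at H2
    simp only [structConst, neg_smul, one_smul,
      show ((0 : Fin 3).succ : Fin 4) = 1 from rfl, show ((1 : Fin 3).succ : Fin 4) = 2 from rfl,
      show ((2 : Fin 3).succ : Fin 4) = 3 from rfl]
    constructor
    · linear_combination (-1 : R) * H1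
    · linear_combination (-1 : R) * H2 - (-1 : R) * H1
  · obtain ⟨rfl, rfl, rfl, rfl⟩ := h
    have H1 := hres (e (((1 : Fin 3)).succ)) (e (((2 : Fin 3)).succ))
    have H2 := hres (e (((1 : Fin 3)).succ)) (e (((1 : Fin 3)).succ) + e (((2 : Fin 3)).succ))
    rw [det_fin_four'] at H1 H2
    rw [show e ((1 : Fin 3)).succ * (e ((1 : Fin 3)).succ + e ((2 : Fin 3)).succ)
        = e ((1 : Fin 3)).succ * e ((1 : Fin 3)).succ
          + e ((1 : Fin 3)).succ * e ((2 : Fin 3)).succ by ring] at H2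
    simp only [Matrix.of_apply, Matrix.cons_val', Matrix.cons_val_zero, Matrix.cons_val_one,
      Matrix.head_cons, Matrix.cons_val_two, Matrix.tail_cons, Matrix.cons_val_three,
      Matrix.empty_val', Matrix.cons_val_fin_one, ← he, map_add, Finsupp.add_apply,
      Module.Basis.repr_self, Finsupp.single_apply, evalTQF, coordsQ, Fin.sum_univ_three,
      show ((0 : Fin 3).succ : Fin 4) = 1 from rfl, show ((1 : Fin 3).succ : Fin 4) = 2 from rfl,
      show ((2 : Fin 3).succ : Fin 4) = 3 from rfl] at H1 H2
    norm_num [Fin.ext_iff, Fin.le_def, Fin.val_succ,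
      show ((0 : Fin 4) : ℕ) = 0 from rfl, show ((1 : Fin 4) : ℕ) = 1 from rfl,
      show ((2 : Fin 4) : ℕ) = 2 from rfl, show ((3 : Fin 4) : ℕ) = 3 from rfl,
      show ((0 : Fin 3) : ℕ) = 0 from rfl, show ((1 : Fin 3) : ℕ) = 1 from rfl,
      show ((2 : Fin 3) : ℕ) = 2 from rfl] at H1 H2
    simp only [structConst, one_smul,
      show ((0 : Fin 3).succ : Fin 4) = 1 from rfl, show ((1 : Fin 3).succ : Fin 4) = 2 from rfl,
      show ((2 : Fin 3).succ : Fin 4) = 3 from rfl]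
    constructor
    · linear_combination (1 : R) * H1
    · linear_combination (1 : R) * H2 - (1 : R) * H1
  · obtain ⟨rfl, rfl, rfl, rfl⟩ := h
    have H1 := hres (e (((2 : Fin 3)).succ)) (e (((0 : Fin 3)).succ))
    have H2 := hres (e (((2 : Fin 3)).succ)) (e (((2 : Fin 3)).succ) + e (((0 : Fin 3)).succ))
    rw [det_fin_four'] at H1 H2
    rw [show e ((2 : Fin 3)).succ * (e ((2 : Fin 3)).succ + e ((0 : Fin 3)).succ)
        = e ((2 : Fin 3)).succ * e ((2 : Fin 3)).succ
          + e ((2 : Fin 3)).succ * e ((0 : Fin 3)).succ by ring] at H2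
    simp only [Matrix.of_apply, Matrix.cons_val', Matrix.cons_val_zero, Matrix.cons_val_one,
      Matrix.head_cons, Matrix.cons_val_two, Matrix.tail_cons, Matrix.cons_val_three,
      Matrix.empty_val', Matrix.cons_val_fin_one, ← he, map_add, Finsupp.add_apply,
      Module.Basis.repr_self, Finsupp.single_apply, evalTQF, coordsQ, Fin.sum_univ_three,
      show ((0 : Fin 3).succ : Fin 4) = 1 from rfl, show ((1 : Fin 3).succ : Fin 4) = 2 from rfl,
      show ((2 : Fin 3).succ : Fin 4) = 3 from rfl] at H1 H2
    norm_num [Fin.ext_iff, Fin.le_def, Fin.val_succ,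
      show ((0 : Fin 4) : ℕ) = 0 from rfl, show ((1 : Fin 4) : ℕ) = 1 from rfl,
      show ((2 : Fin 4) : ℕ) = 2 from rfl, show ((3 : Fin 4) : ℕ) = 3 from rfl,
      show ((0 : Fin 3) : ℕ) = 0 from rfl, show ((1 : Fin 3) : ℕ) = 1 from rfl,
      show ((2 : Fin 3) : ℕ) = 2 from rfl] at H1 H2
    rw [ha 0 2, hb 0 2] at H2
    simp only [structConst, one_smul,
      show ((0 : Fin 3).succ : Fin 4) = 1 from rfl, show ((1 : Fin 3).succ : Fin 4) = 2 from rfl,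
      show ((2 : Fin 3).succ : Fin 4) = 3 from rfl]
    constructor
    · linear_combination (1 : R) * H1
    · linear_combination (1 : R) * H2 - (1 : R) * H1
  · obtain ⟨rfl, rfl, rfl, rfl⟩ := h
    have H1 := hres (e (((2 : Fin 3)).succ)) (e (((1 : Fin 3)).succ))
    have H2 := hres (e (((2 : Fin 3)).succ)) (e (((2 : Fin 3)).succ) + e (((1 : Fin 3)).succ))
    rw [det_fin_four'] at H1 H2
    rw [show e ((2 : Fin 3)).succ * (e ((2 : Fin 3)).succ + e ((1 : Fin 3)).succ)
        = e ((2 : Fin 3)).succ * e ((2 : Fin 3)).succ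
          + e ((2 : Fin 3)).succ * e ((1 : Fin 3)).succ by ring] at H2
    simp only [Matrix.of_apply, Matrix.cons_val', Matrix.cons_val_zero, Matrix.cons_val_one,
      Matrix.head_cons, Matrix.cons_val_two, Matrix.tail_cons, Matrix.cons_val_three,
      Matrix.empty_val', Matrix.cons_val_fin_one, ← he, map_add, Finsupp.add_apply,
      Module.Basis.repr_self, Finsupp.single_apply, evalTQF, coordsQ, Fin.sum_univ_three,
      show ((0 : Fin 3).succ : Fin 4) = 1 from rfl, show ((1 : Fin 3).succ : Fin 4) = 2 from rfl,
      show ((2 : Fin 3).succ : Fin 4) = 3 from rfl] at H1 H2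
    norm_num [Fin.ext_iff, Fin.le_def, Fin.val_succ,
      show ((0 : Fin 4) : ℕ) = 0 from rfl, show ((1 : Fin 4) : ℕ) = 1 from rfl,
      show ((2 : Fin 4) : ℕ) = 2 from rfl, show ((3 : Fin 4) : ℕ) = 3 from rfl,
      show ((0 : Fin 3) : ℕ) = 0 from rfl, show ((1 : Fin 3) : ℕ) = 1 from rfl,
      show ((2 : Fin 3) : ℕ) = 2 from rfl] at H1 H2
    rw [ha 1 2, hb 1 2] at H2
    simp only [structConst, neg_smul, one_smul,
      show ((0 : Fin 3).succ : Fin 4) = 1 from rfl, show ((1 : Fin 3).succ : Fin 4) = 2 from rfl,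
      show ((2 : Fin 3).succ : Fin 4) = 3 from rfl]
    constructor
    · linear_combination (-1 : R) * H1
    · linear_combination (-1 : R) * H2 - (-1 : R) * H1
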